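/- For every t with 1 < t < 1 + 10⁻⁶, the map F is injective on M_t³; that is, if W and Ŵ are points of ℂ⁴ with w₁w₂ + w₃w₄ = 1, ŵ₁ŵ₂ + ŵ₃ŵ₄ = 1, |w₁|² + |w₂|² + |w₃|² + |w₄|² = 2t, |ŵ₁|² + |ŵ₂|² + |ŵ₃|² + |ŵ₄|² = 2t, and F(W) = F(Ŵ), then W = Ŵ. -/

import Mathlib

open Complex ComplexConjugate

noncomputable def Complex.abs : AbsoluteValue ℂ ℝ :=
  IsAbsoluteValue.toAbsoluteValue (norm : ℂ → ℝ)

theorem Complex.abs_eq_norm' (z : ℂ) : Complex.abs z = ‖z‖ := rfl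

theorem Complex.sq_abs (z : ℂ) : Complex.abs z ^ 2 = normSq z := Complex.sq_norm z

theorem Complex.abs_conj (z : ℂ) : Complex.abs (conj z) = Complex.abs z := Complex.norm_conj z

theorem Complex.abs_I : Complex.abs I = 1 := Complex.norm_I

/-- Auxiliary: on `M_t³` with `t` close to `1`, every point is close to the unit sphere
and `(w₂, w₄)` is close to `(conj w₁, conj w₃)`. -/
lemma stmt_17_aux (t : ℝ) (ht : 1 < t) (ht2 : t < 1 + 1/1000000)
    (a b c d : ℂ) (hQ : a * b + c * d = 1)
    (hM : normSq a + normSq b + normSq c + normSq d = 2 * t) :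
    Complex.abs (b - conj a) ≤ 0.0015 ∧ Complex.abs (d - conj c) ≤ 0.0015 ∧
    Complex.abs a ≤ 1.5 ∧ Complex.abs b ≤ 1.5 ∧ Complex.abs c ≤ 1.5 ∧ Complex.abs d ≤ 1.5 := by
  have hre : (a * b + c * d).re = 1 := by rw [hQ]; simp
  have hE : normSq (b - conj a) + normSq (d - conj c) = 2 * t - 2 := by
    rw [Complex.normSq_sub, Complex.normSq_sub, Complex.normSq_conj, Complex.normSq_conj,
      Complex.conj_conj, Complex.conj_conj]
    have h : (a * b + c * d).re = (a * b).re + (c * d).re := by simp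
    rw [h] at hre
    have e2 : (b * a).re = (a * b).re := by rw [mul_comm]
    have e4 : (d * c).re = (c * d).re := by rw [mul_comm]
    linarith
  have k1 : normSq a = Complex.abs a ^ 2 := (Complex.sq_abs _).symm
  have k2 : normSq b = Complex.abs b ^ 2 := (Complex.sq_abs _).symm
  have k3 : normSq c = Complex.abs c ^ 2 := (Complex.sq_abs _).symm
  have k4 : normSq d = Complex.abs d ^ 2 := (Complex.sq_abs _).symm
  refine ⟨?_, ?_, ?_, ?_, ?_, ?_⟩
  · have h1 : (Complex.abs (b - conj a)) ^ 2 ≤ 2 * t - 2 := by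
      rw [Complex.sq_abs]; nlinarith [Complex.normSq_nonneg (d - conj c)]
    nlinarith [Complex.abs.nonneg (b - conj a)]
  · have h1 : (Complex.abs (d - conj c)) ^ 2 ≤ 2 * t - 2 := by
      rw [Complex.sq_abs]; nlinarith [Complex.normSq_nonneg (b - conj a)]
    nlinarith [Complex.abs.nonneg (d - conj c)]
  · nlinarith [Complex.abs.nonneg a, Complex.normSq_nonneg b, Complex.normSq_nonneg c,
      Complex.normSq_nonneg d]
  · nlinarith [Complex.abs.nonneg b, Complex.normSq_nonneg a, Complex.normSq_nonneg c,
      Complex.normSq_nonneg d]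
  · nlinarith [Complex.abs.nonneg c, Complex.normSq_nonneg a, Complex.normSq_nonneg b,
      Complex.normSq_nonneg d]
  · nlinarith [Complex.abs.nonneg d, Complex.normSq_nonneg a, Complex.normSq_nonneg b,
      Complex.normSq_nonneg c]

/-- Auxiliary quartic lower bound. -/
lemma stmt_17_quartic (α β : ℝ) (hs : 0.995 ≤ α + β) :
    0.1 ≤ (2*α*β - β^2)^2 + (α^2 - 2*α*β)^2 := by
  have h4 : (0.995:ℝ)^4 ≤ (α+β)^4 := pow_le_pow_left₀ (by norm_num) hs 4
  nlinarith [sq_nonneg (2*α^2 - 5*α*β + 2*β^2)]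

set_option maxHeartbeats 1000000 in
/-- For `1 < t < 1 + 10⁻⁶`, the map `F(w) = (w₁, w₃, w₂w₃w₄² + i·w₁w₂²w₄)`
is injective on `M_t³ = {w : w₁w₂ + w₃w₄ = 1, |w₁|² + |w₂|² + |w₃|² + |w₄|² = 2t}`. -/
theorem stmt_17 (t : ℝ) (ht : 1 < t) (ht' : t < 1 + 10 ^ (-6 : ℤ))
    (w₁ w₂ w₃ w₄ w₁' w₂' w₃' w₄' : ℂ)
    (hQ : w₁ * w₂ + w₃ * w₄ = 1) (hQ' : w₁' * w₂' + w₃' * w₄' = 1)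
    (hM : ‖w₁‖ ^ 2 + ‖w₂‖ ^ 2 + ‖w₃‖ ^ 2 + ‖w₄‖ ^ 2 =
      2 * t)
    (hM' : ‖w₁'‖ ^ 2 + ‖w₂'‖ ^ 2 + ‖w₃'‖ ^ 2 +
      ‖w₄'‖ ^ 2 = 2 * t)
    (hF : (w₁, w₃, w₂ * w₃ * w₄ ^ 2 + Complex.I * w₁ * w₂ ^ 2 * w₄) =
      (w₁', w₃', w₂' * w₃' * w₄' ^ 2 + Complex.I * w₁' * w₂' ^ 2 * w₄')) :
    (w₁, w₂, w₃, w₄) = (w₁', w₂', w₃', w₄') := by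
  obtain ⟨h1, h3, hG⟩ : w₁ = w₁' ∧ w₃ = w₃' ∧
      w₂ * w₃ * w₄ ^ 2 + Complex.I * w₁ * w₂ ^ 2 * w₄ =
        w₂' * w₃' * w₄' ^ 2 + Complex.I * w₁' * w₂' ^ 2 * w₄' := by
    simpa [Prod.ext_iff] using hF
  subst h1; subst h3
  have ht2 : t < 1 + 1/1000000 := by
    have h10 : ((10:ℝ)) ^ (-6 : ℤ) = 1/1000000 := by norm_num
    rw [h10] at ht'; exact ht'
  simp only [Complex.sq_norm] at hM hM'
  obtain ⟨hd2, hd4, hb1, hb2, hb3, hb4⟩ := stmt_17_aux t ht ht2 w₁ w₂ w₃ w₄ hQ hM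
  obtain ⟨hd2', hd4', -, hb2', -, hb4'⟩ := stmt_17_aux t ht ht2 w₁ w₂' w₃ w₄' hQ' hM'
  -- the key linear system satisfied by the differences
  have huv : w₁ * (w₂ - w₂') + w₃ * (w₄ - w₄') = 0 := by linear_combination hQ - hQ'
  have hAB : (w₃*w₄^2 + Complex.I*w₁*w₄*(w₂+w₂')) * (w₂-w₂')
      + (w₃*w₂'*(w₄+w₄') + Complex.I*w₁*w₂'^2) * (w₄-w₄') = 0 := by
    linear_combination hG
  set D : ℂ := w₁*(w₃*w₂'*(w₄+w₄') + Complex.I*w₁*w₂'^2)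
      - w₃*(w₃*w₄^2 + Complex.I*w₁*w₄*(w₂+w₂')) with hD
  have hDu : D * (w₂ - w₂') = 0 := by
    rw [hD]; linear_combination (w₃*w₂'*(w₄+w₄') + Complex.I*w₁*w₂'^2) * huv - w₃ * hAB
  have hDv : D * (w₄ - w₄') = 0 := by
    rw [hD]; linear_combination w₁ * hAB - (w₃*w₄^2 + Complex.I*w₁*w₄*(w₂+w₂')) * huv
  -- the model determinant D₀ and the perturbation identity
  have hα : ((normSq w₁ : ℝ) : ℂ) = w₁ * conj w₁ := (Complex.mul_conj w₁).symm
  have hβ : ((normSq w₃ : ℝ) : ℂ) = w₃ * conj w₃ := (Complex.mul_conj w₃).symm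
  set D₀ : ℂ := ((2*normSq w₁*normSq w₃ - (normSq w₃)^2 : ℝ) : ℂ)
      + ((normSq w₁^2 - 2*normSq w₁*normSq w₃ : ℝ) : ℂ) * Complex.I with hD0
  have hsplit : D - D₀ =
      w₁*w₃*(conj w₁*((w₄-conj w₃)+(w₄'-conj w₃)) + (w₂'-conj w₁)*(w₄+w₄'))
      + Complex.I*w₁^2*((w₂'+conj w₁)*(w₂'-conj w₁))
      + w₃^2*((w₄+conj w₃)*(conj w₃-w₄))
      + Complex.I*w₁*w₃*(conj w₃*((conj w₁-w₂)+(conj w₁-w₂')) + (conj w₃-w₄)*(w₂+w₂')) := by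
    rw [hD, hD0]
    push_cast
    rw [hα, hβ]
    ring
  -- estimate |D - D₀| ≤ 0.061
  have ha1 : Complex.abs (conj w₁) = Complex.abs w₁ := Complex.abs_conj _
  have ha3 : Complex.abs (conj w₃) = Complex.abs w₃ := Complex.abs_conj _
  have n2 : Complex.abs (conj w₁ - w₂) ≤ 0.0015 := by rw [AbsoluteValue.map_sub]; exact hd2
  have n2' : Complex.abs (conj w₁ - w₂') ≤ 0.0015 := by rw [AbsoluteValue.map_sub]; exact hd2'
  have n4 : Complex.abs (conj w₃ - w₄) ≤ 0.0015 := by rw [AbsoluteValue.map_sub]; exact hd4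
  have s44' : Complex.abs ((w₄-conj w₃)+(w₄'-conj w₃)) ≤ 0.003 :=
    (Complex.abs.add_le _ _).trans (by linarith)
  have s22' : Complex.abs ((conj w₁-w₂)+(conj w₁-w₂')) ≤ 0.003 :=
    (Complex.abs.add_le _ _).trans (by linarith)
  have p44' : Complex.abs (w₄+w₄') ≤ 3 := (Complex.abs.add_le _ _).trans (by linarith)
  have p22' : Complex.abs (w₂+w₂') ≤ 3 := (Complex.abs.add_le _ _).trans (by linarith)
  have p2c1 : Complex.abs (w₂'+conj w₁) ≤ 3 :=
    (Complex.abs.add_le _ _).trans (by rw [ha1]; linarith)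
  have p4c3 : Complex.abs (w₄+conj w₃) ≤ 3 :=
    (Complex.abs.add_le _ _).trans (by rw [ha3]; linarith)
  have hT1 : Complex.abs (w₁*w₃*(conj w₁*((w₄-conj w₃)+(w₄'-conj w₃)) + (w₂'-conj w₁)*(w₄+w₄')))
      ≤ 0.0203 := by
    rw [map_mul, map_mul]
    have inner : Complex.abs (conj w₁*((w₄-conj w₃)+(w₄'-conj w₃)) + (w₂'-conj w₁)*(w₄+w₄'))
        ≤ 0.009 := by
      calc Complex.abs _ ≤ Complex.abs (conj w₁*((w₄-conj w₃)+(w₄'-conj w₃)))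
            + Complex.abs ((w₂'-conj w₁)*(w₄+w₄')) := Complex.abs.add_le _ _
        _ = Complex.abs w₁ * Complex.abs ((w₄-conj w₃)+(w₄'-conj w₃))
            + Complex.abs (w₂'-conj w₁) * Complex.abs (w₄+w₄') := by rw [map_mul, map_mul, ha1]
        _ ≤ 1.5 * 0.003 + 0.0015 * 3 := by gcongr
        _ ≤ 0.009 := by norm_num
    calc Complex.abs w₁ * Complex.abs w₃ * Complex.abs _ ≤ 1.5 * 1.5 * 0.009 := by gcongr
      _ ≤ 0.0203 := by norm_num
  have hT2 : Complex.abs (Complex.I*w₁^2*((w₂'+conj w₁)*(w₂'-conj w₁))) ≤ 0.0102 := by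
    rw [map_mul, map_mul, map_mul, Complex.abs_I, one_mul, map_pow]
    calc Complex.abs w₁ ^ 2 * (Complex.abs (w₂'+conj w₁) * Complex.abs (w₂'-conj w₁))
        ≤ 1.5 ^ 2 * (3 * 0.0015) := by gcongr
      _ ≤ 0.0102 := by norm_num
  have hT3 : Complex.abs (w₃^2*((w₄+conj w₃)*(conj w₃-w₄))) ≤ 0.0102 := by
    rw [map_mul, map_mul, map_pow]
    calc Complex.abs w₃ ^ 2 * (Complex.abs (w₄+conj w₃) * Complex.abs (conj w₃-w₄))
        ≤ 1.5 ^ 2 * (3 * 0.0015) := by gcongr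
      _ ≤ 0.0102 := by norm_num
  have hT4 : Complex.abs (Complex.I*w₁*w₃*(conj w₃*((conj w₁-w₂)+(conj w₁-w₂'))
      + (conj w₃-w₄)*(w₂+w₂'))) ≤ 0.0203 := by
    rw [map_mul, map_mul, map_mul, Complex.abs_I, one_mul]
    have inner : Complex.abs (conj w₃*((conj w₁-w₂)+(conj w₁-w₂')) + (conj w₃-w₄)*(w₂+w₂'))
        ≤ 0.009 := by
      calc Complex.abs _ ≤ Complex.abs (conj w₃*((conj w₁-w₂)+(conj w₁-w₂')))
            + Complex.abs ((conj w₃-w₄)*(w₂+w₂')) := Complex.abs.add_le _ _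
        _ = Complex.abs w₃ * Complex.abs ((conj w₁-w₂)+(conj w₁-w₂'))
            + Complex.abs (conj w₃-w₄) * Complex.abs (w₂+w₂') := by rw [map_mul, map_mul, ha3]
        _ ≤ 1.5 * 0.003 + 0.0015 * 3 := by gcongr
        _ ≤ 0.009 := by norm_num
    calc Complex.abs w₁ * Complex.abs w₃ * Complex.abs _ ≤ 1.5 * 1.5 * 0.009 := by gcongr
      _ ≤ 0.0203 := by norm_num
  have hpert : Complex.abs (D - D₀) ≤ 0.061 := by
    rw [hsplit]
    calc Complex.abs _ ≤ Complex.abs (w₁*w₃*(conj w₁*((w₄-conj w₃)+(w₄'-conj w₃))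
            + (w₂'-conj w₁)*(w₄+w₄'))
          + Complex.I*w₁^2*((w₂'+conj w₁)*(w₂'-conj w₁))
          + w₃^2*((w₄+conj w₃)*(conj w₃-w₄)))
          + Complex.abs (Complex.I*w₁*w₃*(conj w₃*((conj w₁-w₂)+(conj w₁-w₂'))
            + (conj w₃-w₄)*(w₂+w₂'))) := Complex.abs.add_le _ _
      _ ≤ (Complex.abs (w₁*w₃*(conj w₁*((w₄-conj w₃)+(w₄'-conj w₃)) + (w₂'-conj w₁)*(w₄+w₄'))
            + Complex.I*w₁^2*((w₂'+conj w₁)*(w₂'-conj w₁)))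
          + Complex.abs (w₃^2*((w₄+conj w₃)*(conj w₃-w₄))))
          + Complex.abs (Complex.I*w₁*w₃*(conj w₃*((conj w₁-w₂)+(conj w₁-w₂'))
            + (conj w₃-w₄)*(w₂+w₂'))) := by gcongr; exact Complex.abs.add_le _ _
      _ ≤ ((Complex.abs (w₁*w₃*(conj w₁*((w₄-conj w₃)+(w₄'-conj w₃)) + (w₂'-conj w₁)*(w₄+w₄')))
            + Complex.abs (Complex.I*w₁^2*((w₂'+conj w₁)*(w₂'-conj w₁))))
          + Complex.abs (w₃^2*((w₄+conj w₃)*(conj w₃-w₄))))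
          + Complex.abs (Complex.I*w₁*w₃*(conj w₃*((conj w₁-w₂)+(conj w₁-w₂'))
            + (conj w₃-w₄)*(w₂+w₂'))) := by
        gcongr ?_ + _ + _; exact Complex.abs.add_le _ _
      _ ≤ ((0.0203 + 0.0102) + 0.0102) + 0.0203 := by gcongr
      _ ≤ 0.061 := by norm_num
  -- lower bound on |D₀|
  have hsum : 0.995 ≤ normSq w₁ + normSq w₃ := by
    have e2 : Complex.abs w₂ ≤ Complex.abs w₁ + 0.0015 := by
      have h : w₂ = conj w₁ + (w₂ - conj w₁) := by ring
      rw [h]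
      refine (Complex.abs.add_le _ _).trans ?_
      rw [ha1]; linarith
    have e4 : Complex.abs w₄ ≤ Complex.abs w₃ + 0.0015 := by
      have h : w₄ = conj w₃ + (w₄ - conj w₃) := by ring
      rw [h]
      refine (Complex.abs.add_le _ _).trans ?_
      rw [ha3]; linarith
    have q2 : normSq w₂ ≤ (Complex.abs w₁ + 0.0015)^2 := by
      rw [← Complex.sq_abs]
      exact pow_le_pow_left₀ (Complex.abs.nonneg _) e2 2
    have q4 : normSq w₄ ≤ (Complex.abs w₃ + 0.0015)^2 := by
      rw [← Complex.sq_abs]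
      exact pow_le_pow_left₀ (Complex.abs.nonneg _) e4 2
    have r1 : normSq w₁ = Complex.abs w₁ ^ 2 := (Complex.sq_abs _).symm
    have r3 : normSq w₃ = Complex.abs w₃ ^ 2 := (Complex.sq_abs _).symm
    nlinarith [Complex.abs.nonneg w₁, Complex.abs.nonneg w₃]
  have hD0sq : normSq D₀ = (2*normSq w₁*normSq w₃ - (normSq w₃)^2)^2
      + (normSq w₁^2 - 2*normSq w₁*normSq w₃)^2 := by
    rw [hD0]; exact Complex.normSq_add_mul_I _ _
  have hD0lb : 0.31 ≤ Complex.abs D₀ := by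
    have hq : 0.1 ≤ normSq D₀ := by
      rw [hD0sq]
      exact stmt_17_quartic _ _ hsum
    have habs : Complex.abs D₀ ^ 2 = normSq D₀ := Complex.sq_abs _
    nlinarith [Complex.abs.nonneg D₀]
  -- conclude D ≠ 0
  have hDne : D ≠ 0 := by
    intro h0
    have h1 : Complex.abs D₀ ≤ Complex.abs (D - D₀) := by
      rw [h0, zero_sub, AbsoluteValue.map_neg]
    linarith
  have hu : w₂ - w₂' = 0 := by
    rcases mul_eq_zero.mp hDu with h | h
    · exact absurd h hDne
    · exact h
  have hv : w₄ - w₄' = 0 := by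
    rcases mul_eq_zero.mp hDv with h | h
    · exact absurd h hDne
    · exact h
  have hu' : w₂ = w₂' := sub_eq_zero.mp hu
  have hv' : w₄ = w₄' := sub_eq_zero.mp hv
  rw [hu', hv']
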